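/- The shuffle product P ⋆ Q = Σ_{w ∈ Sh_{r,s}} w( ∏_{1≤i≤r < j ≤ r+s} g(x_i/x_j) · P(x_1,…,x_r) Q(x_{r+1},…,x_{r+s}) ) on the graded space of symmetric rational functions ⊕_r C(x_1,…,x_r)^{S_r} is associative. -/

import Mathlib

open Finset

/-- The set of `(r,s)`-shuffles in `S_{r+s}`: permutations increasing on the
first `r` letters and on the last `s` letters. -/
def Sh (r s : ℕ) : Finset (Equiv.Perm (Fin (r + s))) :=
  Finset.univ.filter fun w =>
    (∀ i j : Fin r, i < j → w (Fin.castAdd s i) < w (Fin.castAdd s j)) ∧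
    (∀ i j : Fin s, i < j → w (Fin.natAdd r i) < w (Fin.natAdd r j))

/-- The shuffle product associated to a rational function `g`:
`P ⋆ Q = Σ_{w ∈ Sh_{r,s}} w( ∏_{i ≤ r < j} g(x_i/x_j) · P(x_1,…,x_r)
Q(x_{r+1},…,x_{r+s}) )`.  (Rational functions in `n` variables are modelled as
`ℂ`-valued functions of `n` complex variables.) -/
noncomputable def shuffleMul (g : ℂ → ℂ) {r s : ℕ}
    (P : (Fin r → ℂ) → ℂ) (Q : (Fin s → ℂ) → ℂ) : (Fin (r + s) → ℂ) → ℂ :=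
  fun x => ∑ w ∈ Sh r s,
    (∏ i : Fin r, ∏ j : Fin s,
        g (x (w (Fin.castAdd s i)) / x (w (Fin.natAdd r j)))) *
      P (fun i => x (w (Fin.castAdd s i))) * Q (fun j => x (w (Fin.natAdd r j)))

open Equiv

/-- Block permutation on `Fin (a+b)` from permutations of the two blocks. -/
def blP {a b : ℕ} (u : Equiv.Perm (Fin a)) (v : Equiv.Perm (Fin b)) : Equiv.Perm (Fin (a + b)) :=
  finSumFinEquiv.permCongr (Equiv.sumCongr u v)

@[simp] lemma blP_castAdd {a b : ℕ} (u : Equiv.Perm (Fin a)) (v : Equiv.Perm (Fin b)) (i : Fin a) :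
    blP u v (Fin.castAdd b i) = Fin.castAdd b (u i) := by
  simp [blP, finSumFinEquiv_symm_apply_castAdd]

@[simp] lemma blP_natAdd {a b : ℕ} (u : Equiv.Perm (Fin a)) (v : Equiv.Perm (Fin b)) (j : Fin b) :
    blP u v (Fin.natAdd a j) = Fin.natAdd a (v j) := by
  simp [blP, finSumFinEquiv_symm_apply_natAdd]

lemma blP_mul {a b : ℕ} (u u' : Equiv.Perm (Fin a)) (v v' : Equiv.Perm (Fin b)) :
    blP u v * blP u' v' = blP (u * u') (v * v') := by
  ext k
  refine Fin.addCases (fun i => ?_) (fun j => ?_) k <;>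
    simp [Equiv.Perm.mul_apply]

@[simp] lemma blP_one {a b : ℕ} : blP (1 : Equiv.Perm (Fin a)) (1 : Equiv.Perm (Fin b)) = 1 := by
  ext k
  refine Fin.addCases (fun i => ?_) (fun j => ?_) k <;> simp

/-- Two strictly monotone tuples that differ by a permutation are equal (and the
permutation is the identity). -/
lemma strictMono_perm_eq {n : ℕ} {α : Type*} [LinearOrder α] {c₁ c₂ : Fin n → α}
    (h₁ : StrictMono c₁) (h₂ : StrictMono c₂) (a₁ a₂ : Equiv.Perm (Fin n))
    (h : ∀ i, c₁ (a₁ i) = c₂ (a₂ i)) : c₁ = c₂ ∧ a₁ = a₂ := by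
  classical
  set s : Finset α := Finset.image c₁ Finset.univ with hs
  have hcard : s.card = n := by
    rw [hs, Finset.card_image_of_injective _ h₁.injective, Finset.card_univ, Fintype.card_fin]
  have hc₁ : c₁ = s.orderEmbOfFin hcard :=
    Finset.orderEmbOfFin_unique hcard (fun x => Finset.mem_image_of_mem _ (Finset.mem_univ x)) h₁
  have hc₂mem : ∀ x, c₂ x ∈ s := by
    intro x
    have : c₂ x = c₁ (a₁ (a₂⁻¹ x)) := by rw [h (a₂⁻¹ x), ← Equiv.Perm.mul_apply, mul_inv_cancel, Equiv.Perm.one_apply]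
    rw [this]
    exact Finset.mem_image_of_mem _ (Finset.mem_univ _)
  have hc₂ : c₂ = s.orderEmbOfFin hcard := Finset.orderEmbOfFin_unique hcard hc₂mem h₂
  have hcc : c₁ = c₂ := hc₁.trans hc₂.symm
  refine ⟨hcc, Equiv.ext fun i => h₁.injective ?_⟩
  rw [h i, ← hcc]

/-- The summand of the shuffle product, as a function of the permutation. -/
noncomputable def sTerm (g : ℂ → ℂ) {r s : ℕ} (P : (Fin r → ℂ) → ℂ) (Q : (Fin s → ℂ) → ℂ)
    (x : Fin (r + s) → ℂ) (w : Equiv.Perm (Fin (r + s))) : ℂ :=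
  (∏ i : Fin r, ∏ j : Fin s,
      g (x (w (Fin.castAdd s i)) / x (w (Fin.natAdd r j)))) *
    P (fun i => x (w (Fin.castAdd s i))) * Q (fun j => x (w (Fin.natAdd r j)))

lemma shuffleMul_eq_sum_sTerm (g : ℂ → ℂ) {r s : ℕ} (P : (Fin r → ℂ) → ℂ)
    (Q : (Fin s → ℂ) → ℂ) (x : Fin (r + s) → ℂ) :
    shuffleMul g P Q x = ∑ w ∈ Sh r s, sTerm g P Q x w := rfl

/-- The summand is invariant under right multiplication by block permutations. -/
lemma sTerm_mul_blP (g : ℂ → ℂ) {r s : ℕ} {P : (Fin r → ℂ) → ℂ} {Q : (Fin s → ℂ) → ℂ}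
    (hP : ∀ (σ : Equiv.Perm (Fin r)) (x : Fin r → ℂ), P (x ∘ σ) = P x)
    (hQ : ∀ (σ : Equiv.Perm (Fin s)) (x : Fin s → ℂ), Q (x ∘ σ) = Q x)
    (x : Fin (r + s) → ℂ) (w : Equiv.Perm (Fin (r + s)))
    (a : Equiv.Perm (Fin r)) (b : Equiv.Perm (Fin s)) :
    sTerm g P Q x (w * blP a b) = sTerm g P Q x w := by
  unfold sTerm
  simp only [Equiv.Perm.mul_apply, blP_castAdd, blP_natAdd]
  congr 1
  · congr 1
    · calc ∏ i : Fin r, ∏ j : Fin s, g (x (w (Fin.castAdd s (a i))) / x (w (Fin.natAdd r (b j))))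
          = ∏ i : Fin r, ∏ j : Fin s, g (x (w (Fin.castAdd s (a i))) / x (w (Fin.natAdd r j))) := by
            refine Finset.prod_congr rfl fun i _ => ?_
            exact Equiv.prod_comp b fun j => g (x (w (Fin.castAdd s (a i))) / x (w (Fin.natAdd r j)))
        _ = ∏ i : Fin r, ∏ j : Fin s, g (x (w (Fin.castAdd s i)) / x (w (Fin.natAdd r j))) :=
            Equiv.prod_comp a fun i => ∏ j : Fin s, g (x (w (Fin.castAdd s i)) / x (w (Fin.natAdd r j)))
    · exact hP a fun i => x (w (Fin.castAdd s i))
  · exact hQ b fun j => x (w (Fin.natAdd r j))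

/-- Every permutation of `Fin (r+s)` decomposes as a shuffle times a block permutation. -/
lemma exists_shuffle_decomp {r s : ℕ} (w : Equiv.Perm (Fin (r + s))) :
    ∃ p : Equiv.Perm (Fin (r + s)) × (Equiv.Perm (Fin r) × Equiv.Perm (Fin s)),
      p.1 ∈ Sh r s ∧ p.1 * blP p.2.1 p.2.2 = w := by
  classical
  set f : Fin r → Fin (r + s) := fun i => w (Fin.castAdd s i) with hf
  set h : Fin s → Fin (r + s) := fun j => w (Fin.natAdd r j) with hh
  set a := Tuple.sort f with ha
  set b := Tuple.sort h with hb
  have hfa : StrictMono (f ∘ a) :=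
    (Tuple.monotone_sort f).strictMono_of_injective
      ((w.injective.comp (Fin.castAdd_injective r s)).comp a.injective)
  have hhb : StrictMono (h ∘ b) :=
    (Tuple.monotone_sort h).strictMono_of_injective
      ((w.injective.comp (Fin.strictMono_natAdd r).injective).comp b.injective)
  refine ⟨⟨w * blP a b, a⁻¹, b⁻¹⟩, ?_, ?_⟩
  · rw [Sh, Finset.mem_filter]
    refine ⟨Finset.mem_univ _, fun i j hij => ?_, fun i j hij => ?_⟩
    · simpa [Equiv.Perm.mul_apply, Function.comp] using hfa hij
    · simpa [Equiv.Perm.mul_apply, Function.comp] using hhb hij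
  · rw [mul_assoc, blP_mul]
    simp

lemma shuffle_decomp_inj {r s : ℕ}
    {v₁ v₂ : Equiv.Perm (Fin (r + s))} (h₁ : v₁ ∈ Sh r s) (h₂ : v₂ ∈ Sh r s)
    {a₁ a₂ : Equiv.Perm (Fin r)} {b₁ b₂ : Equiv.Perm (Fin s)}
    (h : v₁ * blP a₁ b₁ = v₂ * blP a₂ b₂) : v₁ = v₂ ∧ a₁ = a₂ ∧ b₁ = b₂ := by
  rw [Sh, Finset.mem_filter] at h₁ h₂
  have hc₁ : StrictMono fun i : Fin r => v₁ (Fin.castAdd s i) := fun i j hij => h₁.2.1 i j hij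
  have hc₂ : StrictMono fun i : Fin r => v₂ (Fin.castAdd s i) := fun i j hij => h₂.2.1 i j hij
  have hd₁ : StrictMono fun j : Fin s => v₁ (Fin.natAdd r j) := fun i j hij => h₁.2.2 i j hij
  have hd₂ : StrictMono fun j : Fin s => v₂ (Fin.natAdd r j) := fun i j hij => h₂.2.2 i j hij
  have happ : ∀ k, (v₁ * blP a₁ b₁) k = (v₂ * blP a₂ b₂) k := fun k => by rw [h]
  have hca := strictMono_perm_eq hc₁ hc₂ a₁ a₂ (fun i => by
    simpa [Equiv.Perm.mul_apply] using happ (Fin.castAdd s i))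
  have hdb := strictMono_perm_eq hd₁ hd₂ b₁ b₂ (fun j => by
    simpa [Equiv.Perm.mul_apply] using happ (Fin.natAdd r j))
  have hab : a₁ = a₂ := hca.2
  have hbb : b₁ = b₂ := hdb.2
  subst hab; subst hbb
  exact ⟨mul_right_cancel h, rfl, rfl⟩

/-- The key "coset" identity: the sum over all permutations equals
`r! s!` times the shuffle sum. -/
lemma sum_univ_sTerm (g : ℂ → ℂ) {r s : ℕ} (P : (Fin r → ℂ) → ℂ) (Q : (Fin s → ℂ) → ℂ)
    (hP : ∀ (σ : Equiv.Perm (Fin r)) (x : Fin r → ℂ), P (x ∘ σ) = P x)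
    (hQ : ∀ (σ : Equiv.Perm (Fin s)) (x : Fin s → ℂ), Q (x ∘ σ) = Q x)
    (x : Fin (r + s) → ℂ) :
    ∑ w : Equiv.Perm (Fin (r + s)), sTerm g P Q x w
      = ((r.factorial * s.factorial : ℕ) : ℂ) * shuffleMul g P Q x := by
  classical
  have key : ∑ p ∈ (Sh r s) ×ˢ ((Finset.univ : Finset (Equiv.Perm (Fin r))) ×ˢ
        (Finset.univ : Finset (Equiv.Perm (Fin s)))), sTerm g P Q x p.1
      = ∑ w : Equiv.Perm (Fin (r + s)), sTerm g P Q x w := by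
    refine Finset.sum_bij (fun p _ => p.1 * blP p.2.1 p.2.2) (fun p _ => Finset.mem_univ _)
      ?_ ?_ ?_
    · intro p hp q hq hpq
      rw [Finset.mem_product] at hp hq
      obtain ⟨hv, ha, hb⟩ := shuffle_decomp_inj hp.1 hq.1 hpq
      exact Prod.ext hv (Prod.ext ha hb)
    · intro w _
      obtain ⟨p, hp, hpw⟩ := exists_shuffle_decomp w
      exact ⟨p, by simp [Finset.mem_product, hp], hpw⟩
    · intro p hp
      exact (sTerm_mul_blP g hP hQ x p.1 p.2.1 p.2.2).symm
  rw [← key, Finset.sum_product, shuffleMul_eq_sum_sTerm, Finset.mul_sum]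
  refine Finset.sum_congr rfl fun v _ => ?_
  rw [show (∑ y ∈ (Finset.univ : Finset (Equiv.Perm (Fin r))) ×ˢ
        (Finset.univ : Finset (Equiv.Perm (Fin s))), sTerm g P Q x ((v, y) : _ × _).1)
      = ∑ _y ∈ (Finset.univ : Finset (Equiv.Perm (Fin r))) ×ˢ
        (Finset.univ : Finset (Equiv.Perm (Fin s))), sTerm g P Q x v from rfl]
  rw [Finset.sum_const, Finset.card_product, Finset.card_univ, Finset.card_univ,
    Fintype.card_perm, Fintype.card_perm, Fintype.card_fin, Fintype.card_fin, nsmul_eq_mul]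

/-- A shuffle product of symmetric functions is symmetric. -/
lemma shuffleMul_perm (g : ℂ → ℂ) {r s : ℕ} {P : (Fin r → ℂ) → ℂ} {Q : (Fin s → ℂ) → ℂ}
    (hP : ∀ (σ : Equiv.Perm (Fin r)) (x : Fin r → ℂ), P (x ∘ σ) = P x)
    (hQ : ∀ (σ : Equiv.Perm (Fin s)) (x : Fin s → ℂ), Q (x ∘ σ) = Q x)
    (σ : Equiv.Perm (Fin (r + s))) (x : Fin (r + s) → ℂ) :
    shuffleMul g P Q (x ∘ σ) = shuffleMul g P Q x := by
  have hcast : ((r.factorial * s.factorial : ℕ) : ℂ) ≠ 0 :=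
    Nat.cast_ne_zero.mpr (Nat.mul_ne_zero r.factorial_ne_zero s.factorial_ne_zero)
  apply mul_left_cancel₀ hcast
  rw [← sum_univ_sTerm g P Q hP hQ, ← sum_univ_sTerm g P Q hP hQ]
  have hterm : ∀ w, sTerm g P Q (x ∘ σ) w = sTerm g P Q x (σ * w) := fun w => rfl
  simp_rw [hterm]
  exact Fintype.sum_bijective (σ * ·) (Group.mulLeft_bijective σ) _ _ (fun w => rfl)

/-- The common "triple shuffle" summand. -/
noncomputable def G3 (g : ℂ → ℂ) {r s t : ℕ} (P : (Fin r → ℂ) → ℂ) (Q : (Fin s → ℂ) → ℂ)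
    (R : (Fin t → ℂ) → ℂ) (x : Fin (r + s + t) → ℂ) (σ : Equiv.Perm (Fin (r + s + t))) : ℂ :=
  (∏ i : Fin r, ∏ j : Fin s,
      g (x (σ (Fin.castAdd t (Fin.castAdd s i))) / x (σ (Fin.castAdd t (Fin.natAdd r j))))) *
  (∏ i : Fin r, ∏ k : Fin t,
      g (x (σ (Fin.castAdd t (Fin.castAdd s i))) / x (σ (Fin.natAdd (r + s) k)))) *
  (∏ j : Fin s, ∏ k : Fin t,
      g (x (σ (Fin.castAdd t (Fin.natAdd r j))) / x (σ (Fin.natAdd (r + s) k)))) *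
  P (fun i => x (σ (Fin.castAdd t (Fin.castAdd s i)))) *
  Q (fun j => x (σ (Fin.castAdd t (Fin.natAdd r j)))) *
  R (fun k => x (σ (Fin.natAdd (r + s) k)))

lemma left_core (g : ℂ → ℂ) {r s t : ℕ} (P : (Fin r → ℂ) → ℂ) (Q : (Fin s → ℂ) → ℂ)
    (R : (Fin t → ℂ) → ℂ) (x : Fin (r + s + t) → ℂ)
    (w : Equiv.Perm (Fin (r + s + t))) (u : Equiv.Perm (Fin (r + s))) :
    (∏ i : Fin (r + s), ∏ k : Fin t,
        g (x (w (Fin.castAdd t i)) / x (w (Fin.natAdd (r + s) k)))) *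
      sTerm g P Q (fun i => x (w (Fin.castAdd t i))) u *
      R (fun k => x (w (Fin.natAdd (r + s) k)))
    = G3 g P Q R x (w * blP u (1 : Equiv.Perm (Fin t))) := by
  unfold sTerm G3
  simp only [Equiv.Perm.mul_apply, blP_castAdd, blP_natAdd, Equiv.Perm.one_apply]
  rw [← Equiv.prod_comp u (fun i => ∏ k : Fin t,
      g (x (w (Fin.castAdd t i)) / x (w (Fin.natAdd (r + s) k)))), Fin.prod_univ_add]
  ring

lemma right_core (g : ℂ → ℂ) {r s t : ℕ} (P : (Fin r → ℂ) → ℂ) (Q : (Fin s → ℂ) → ℂ)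
    (R : (Fin t → ℂ) → ℂ) (x : Fin (r + s + t) → ℂ)
    (w : Equiv.Perm (Fin (r + (s + t)))) (u : Equiv.Perm (Fin (s + t))) :
    (∏ i : Fin r, ∏ j : Fin (s + t),
        g (x (Fin.cast (Nat.add_assoc r s t).symm (w (Fin.castAdd (s + t) i))) /
           x (Fin.cast (Nat.add_assoc r s t).symm (w (Fin.natAdd r j))))) *
      P (fun i => x (Fin.cast (Nat.add_assoc r s t).symm (w (Fin.castAdd (s + t) i)))) *
      sTerm g Q R (fun j => x (Fin.cast (Nat.add_assoc r s t).symm (w (Fin.natAdd r j)))) u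
    = G3 g P Q R x ((finCongr (Nat.add_assoc r s t).symm).permCongr
        (w * blP (1 : Equiv.Perm (Fin r)) u)) := by
  have h1 : ∀ i : Fin r,
      ((finCongr (Nat.add_assoc r s t).symm).permCongr (w * blP (1 : Equiv.Perm (Fin r)) u))
        (Fin.castAdd t (Fin.castAdd s i))
      = Fin.cast (Nat.add_assoc r s t).symm (w (Fin.castAdd (s + t) i)) := by
    intro i
    have he : Fin.cast (Nat.add_assoc r s t) (Fin.castAdd t (Fin.castAdd s i))
        = Fin.castAdd (s + t) i := by
      apply Fin.ext; simp
    simp only [Equiv.permCongr_apply, finCongr_symm, finCongr_apply, Equiv.Perm.mul_apply, he,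
      blP_castAdd, Equiv.Perm.one_apply]
  have h2 : ∀ j : Fin s,
      ((finCongr (Nat.add_assoc r s t).symm).permCongr (w * blP (1 : Equiv.Perm (Fin r)) u))
        (Fin.castAdd t (Fin.natAdd r j))
      = Fin.cast (Nat.add_assoc r s t).symm (w (Fin.natAdd r (u (Fin.castAdd t j)))) := by
    intro j
    have he : Fin.cast (Nat.add_assoc r s t) (Fin.castAdd t (Fin.natAdd r j))
        = Fin.natAdd r (Fin.castAdd t j) := by
      apply Fin.ext; simp
    simp only [Equiv.permCongr_apply, finCongr_symm, finCongr_apply, Equiv.Perm.mul_apply, he,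
      blP_natAdd]
  have h3 : ∀ k : Fin t,
      ((finCongr (Nat.add_assoc r s t).symm).permCongr (w * blP (1 : Equiv.Perm (Fin r)) u))
        (Fin.natAdd (r + s) k)
      = Fin.cast (Nat.add_assoc r s t).symm (w (Fin.natAdd r (u (Fin.natAdd s k)))) := by
    intro k
    have he : Fin.cast (Nat.add_assoc r s t) (Fin.natAdd (r + s) k)
        = Fin.natAdd r (Fin.natAdd s k) := by
      apply Fin.ext; simp [Nat.add_assoc]
    simp only [Equiv.permCongr_apply, finCongr_symm, finCongr_apply, Equiv.Perm.mul_apply, he,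
      blP_natAdd]
  unfold sTerm G3
  simp only [h1, h2, h3]
  have hsplit : ∀ i : Fin r,
      (∏ j : Fin (s + t),
        g (x (Fin.cast (Nat.add_assoc r s t).symm (w (Fin.castAdd (s + t) i))) /
           x (Fin.cast (Nat.add_assoc r s t).symm (w (Fin.natAdd r j)))))
      = (∏ j : Fin s,
          g (x (Fin.cast (Nat.add_assoc r s t).symm (w (Fin.castAdd (s + t) i))) /
             x (Fin.cast (Nat.add_assoc r s t).symm (w (Fin.natAdd r (u (Fin.castAdd t j))))))) *
        (∏ k : Fin t,
          g (x (Fin.cast (Nat.add_assoc r s t).symm (w (Fin.castAdd (s + t) i))) /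
             x (Fin.cast (Nat.add_assoc r s t).symm (w (Fin.natAdd r (u (Fin.natAdd s k))))))) := by
    intro i
    rw [← Equiv.prod_comp u (fun j =>
      g (x (Fin.cast (Nat.add_assoc r s t).symm (w (Fin.castAdd (s + t) i))) /
         x (Fin.cast (Nat.add_assoc r s t).symm (w (Fin.natAdd r j))))), Fin.prod_univ_add]
  simp only [hsplit]
  rw [Finset.prod_mul_distrib]
  ring

/-- **Associativity of the shuffle product** on the graded space
`⊕_r ℂ(x_1,…,x_r)^{S_r}` of symmetric rational functions. -/
theorem stmt2 (g : ℂ → ℂ) (r s t : ℕ)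
    (P : (Fin r → ℂ) → ℂ) (Q : (Fin s → ℂ) → ℂ) (R : (Fin t → ℂ) → ℂ)
    (hP : ∀ (σ : Equiv.Perm (Fin r)) (x : Fin r → ℂ), P (x ∘ σ) = P x)
    (hQ : ∀ (σ : Equiv.Perm (Fin s)) (x : Fin s → ℂ), Q (x ∘ σ) = Q x)
    (hR : ∀ (σ : Equiv.Perm (Fin t)) (x : Fin t → ℂ), R (x ∘ σ) = R x)
    (x : Fin (r + s + t) → ℂ) :
    shuffleMul g (shuffleMul g P Q) R x =
      shuffleMul g P (shuffleMul g Q R)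
        (fun i => x (Fin.cast (Nat.add_assoc r s t).symm i)) := by
  classical
  have hPQ : ∀ (σ : Equiv.Perm (Fin (r + s))) (y : Fin (r + s) → ℂ),
      shuffleMul g P Q (y ∘ σ) = shuffleMul g P Q y := fun σ y => shuffleMul_perm g hP hQ σ y
  have hQR : ∀ (σ : Equiv.Perm (Fin (s + t))) (y : Fin (s + t) → ℂ),
      shuffleMul g Q R (y ∘ σ) = shuffleMul g Q R y := fun σ y => shuffleMul_perm g hQ hR σ y
  -- LEFT-HAND SIDE
  have L1 := sum_univ_sTerm g (shuffleMul g P Q) R hPQ hR x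
  have L2 : ∀ w : Equiv.Perm (Fin (r + s + t)),
      ((r.factorial * s.factorial : ℕ) : ℂ) * sTerm g (shuffleMul g P Q) R x w
      = ∑ u : Equiv.Perm (Fin (r + s)), G3 g P Q R x (w * blP u (1 : Equiv.Perm (Fin t))) := by
    intro w
    have hin := sum_univ_sTerm g P Q hP hQ (fun i => x (w (Fin.castAdd t i)))
    calc ((r.factorial * s.factorial : ℕ) : ℂ) * sTerm g (shuffleMul g P Q) R x w
        = (∏ i : Fin (r + s), ∏ k : Fin t,
            g (x (w (Fin.castAdd t i)) / x (w (Fin.natAdd (r + s) k)))) *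
          (((r.factorial * s.factorial : ℕ) : ℂ) *
            shuffleMul g P Q (fun i => x (w (Fin.castAdd t i)))) *
          R (fun k => x (w (Fin.natAdd (r + s) k))) := by unfold sTerm; ring
      _ = (∏ i : Fin (r + s), ∏ k : Fin t,
            g (x (w (Fin.castAdd t i)) / x (w (Fin.natAdd (r + s) k)))) *
          (∑ u : Equiv.Perm (Fin (r + s)), sTerm g P Q (fun i => x (w (Fin.castAdd t i))) u) *
          R (fun k => x (w (Fin.natAdd (r + s) k))) := by rw [← hin]
      _ = ∑ u : Equiv.Perm (Fin (r + s)),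
          (∏ i : Fin (r + s), ∏ k : Fin t,
            g (x (w (Fin.castAdd t i)) / x (w (Fin.natAdd (r + s) k)))) *
          sTerm g P Q (fun i => x (w (Fin.castAdd t i))) u *
          R (fun k => x (w (Fin.natAdd (r + s) k))) := by
            rw [Finset.mul_sum, Finset.sum_mul]
      _ = ∑ u : Equiv.Perm (Fin (r + s)), G3 g P Q R x (w * blP u (1 : Equiv.Perm (Fin t))) :=
            Finset.sum_congr rfl fun u _ => left_core g P Q R x w u
  have L3 : ∑ w : Equiv.Perm (Fin (r + s + t)), ∑ u : Equiv.Perm (Fin (r + s)),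
        G3 g P Q R x (w * blP u (1 : Equiv.Perm (Fin t)))
      = (((r + s).factorial : ℕ) : ℂ) * ∑ σ : Equiv.Perm (Fin (r + s + t)), G3 g P Q R x σ := by
    rw [Finset.sum_comm]
    have hb : ∀ u : Equiv.Perm (Fin (r + s)),
        ∑ w : Equiv.Perm (Fin (r + s + t)), G3 g P Q R x (w * blP u (1 : Equiv.Perm (Fin t)))
        = ∑ σ : Equiv.Perm (Fin (r + s + t)), G3 g P Q R x σ := fun u =>
      Fintype.sum_bijective (· * blP u (1 : Equiv.Perm (Fin t)))
        (Group.mulRight_bijective _) _ _ (fun w => rfl)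
    simp_rw [hb]
    rw [Finset.sum_const, Finset.card_univ, Fintype.card_perm, Fintype.card_fin, nsmul_eq_mul]
  have hL : (((r + s).factorial : ℕ) : ℂ) *
      (((r.factorial * s.factorial * t.factorial : ℕ) : ℂ) *
        shuffleMul g (shuffleMul g P Q) R x)
      = (((r + s).factorial : ℕ) : ℂ) *
        ∑ σ : Equiv.Perm (Fin (r + s + t)), G3 g P Q R x σ := by
    rw [← L3]
    calc (((r + s).factorial : ℕ) : ℂ) *
        (((r.factorial * s.factorial * t.factorial : ℕ) : ℂ) *
          shuffleMul g (shuffleMul g P Q) R x)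
        = ((r.factorial * s.factorial : ℕ) : ℂ) *
          ((((r + s).factorial * t.factorial : ℕ) : ℂ) *
            shuffleMul g (shuffleMul g P Q) R x) := by push_cast; ring
      _ = ((r.factorial * s.factorial : ℕ) : ℂ) *
          ∑ w : Equiv.Perm (Fin (r + s + t)), sTerm g (shuffleMul g P Q) R x w := by rw [L1]
      _ = ∑ w : Equiv.Perm (Fin (r + s + t)),
          ((r.factorial * s.factorial : ℕ) : ℂ) * sTerm g (shuffleMul g P Q) R x w :=
            Finset.mul_sum _ _ _
      _ = ∑ w : Equiv.Perm (Fin (r + s + t)), ∑ u : Equiv.Perm (Fin (r + s)),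
          G3 g P Q R x (w * blP u (1 : Equiv.Perm (Fin t))) :=
            Finset.sum_congr rfl fun w _ => L2 w
  have hLkey : ((r.factorial * s.factorial * t.factorial : ℕ) : ℂ) *
      shuffleMul g (shuffleMul g P Q) R x
      = ∑ σ : Equiv.Perm (Fin (r + s + t)), G3 g P Q R x σ :=
    mul_left_cancel₀ (Nat.cast_ne_zero.mpr (r + s).factorial_ne_zero) hL
  -- RIGHT-HAND SIDE
  have R1 := sum_univ_sTerm g P (shuffleMul g Q R) hP hQR
    (fun i => x (Fin.cast (Nat.add_assoc r s t).symm i))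
  have R2 : ∀ w : Equiv.Perm (Fin (r + (s + t))),
      ((s.factorial * t.factorial : ℕ) : ℂ) * sTerm g P (shuffleMul g Q R)
        (fun i => x (Fin.cast (Nat.add_assoc r s t).symm i)) w
      = ∑ u : Equiv.Perm (Fin (s + t)), G3 g P Q R x
          ((finCongr (Nat.add_assoc r s t).symm).permCongr
            (w * blP (1 : Equiv.Perm (Fin r)) u)) := by
    intro w
    have hin := sum_univ_sTerm g Q R hQ hR
      (fun j => x (Fin.cast (Nat.add_assoc r s t).symm (w (Fin.natAdd r j))))
    calc ((s.factorial * t.factorial : ℕ) : ℂ) * sTerm g P (shuffleMul g Q R)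
          (fun i => x (Fin.cast (Nat.add_assoc r s t).symm i)) w
        = (∏ i : Fin r, ∏ j : Fin (s + t),
            g (x (Fin.cast (Nat.add_assoc r s t).symm (w (Fin.castAdd (s + t) i))) /
               x (Fin.cast (Nat.add_assoc r s t).symm (w (Fin.natAdd r j))))) *
          P (fun i => x (Fin.cast (Nat.add_assoc r s t).symm (w (Fin.castAdd (s + t) i)))) *
          (((s.factorial * t.factorial : ℕ) : ℂ) * shuffleMul g Q R
            (fun j => x (Fin.cast (Nat.add_assoc r s t).symm (w (Fin.natAdd r j))))) := by
            unfold sTerm; ring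
      _ = (∏ i : Fin r, ∏ j : Fin (s + t),
            g (x (Fin.cast (Nat.add_assoc r s t).symm (w (Fin.castAdd (s + t) i))) /
               x (Fin.cast (Nat.add_assoc r s t).symm (w (Fin.natAdd r j))))) *
          P (fun i => x (Fin.cast (Nat.add_assoc r s t).symm (w (Fin.castAdd (s + t) i)))) *
          (∑ u : Equiv.Perm (Fin (s + t)), sTerm g Q R
            (fun j => x (Fin.cast (Nat.add_assoc r s t).symm (w (Fin.natAdd r j)))) u) := by
            rw [← hin]
      _ = ∑ u : Equiv.Perm (Fin (s + t)),
          (∏ i : Fin r, ∏ j : Fin (s + t),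
            g (x (Fin.cast (Nat.add_assoc r s t).symm (w (Fin.castAdd (s + t) i))) /
               x (Fin.cast (Nat.add_assoc r s t).symm (w (Fin.natAdd r j))))) *
          P (fun i => x (Fin.cast (Nat.add_assoc r s t).symm (w (Fin.castAdd (s + t) i)))) *
          sTerm g Q R
            (fun j => x (Fin.cast (Nat.add_assoc r s t).symm (w (Fin.natAdd r j)))) u := by
            rw [Finset.mul_sum]
      _ = ∑ u : Equiv.Perm (Fin (s + t)), G3 g P Q R x
          ((finCongr (Nat.add_assoc r s t).symm).permCongr
            (w * blP (1 : Equiv.Perm (Fin r)) u)) :=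
            Finset.sum_congr rfl fun u _ => right_core g P Q R x w u
  have R3 : ∑ w : Equiv.Perm (Fin (r + (s + t))), ∑ u : Equiv.Perm (Fin (s + t)),
        G3 g P Q R x ((finCongr (Nat.add_assoc r s t).symm).permCongr
          (w * blP (1 : Equiv.Perm (Fin r)) u))
      = (((s + t).factorial : ℕ) : ℂ) * ∑ σ : Equiv.Perm (Fin (r + s + t)), G3 g P Q R x σ := by
    rw [Finset.sum_comm]
    have hb : ∀ u : Equiv.Perm (Fin (s + t)),
        ∑ w : Equiv.Perm (Fin (r + (s + t))), G3 g P Q R x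
          ((finCongr (Nat.add_assoc r s t).symm).permCongr
            (w * blP (1 : Equiv.Perm (Fin r)) u))
        = ∑ σ : Equiv.Perm (Fin (r + s + t)), G3 g P Q R x σ := fun u =>
      Fintype.sum_equiv
        ((Equiv.mulRight (blP (1 : Equiv.Perm (Fin r)) u)).trans
          (finCongr (Nat.add_assoc r s t).symm).permCongr) _ _ (fun w => rfl)
    simp_rw [hb]
    rw [Finset.sum_const, Finset.card_univ, Fintype.card_perm, Fintype.card_fin, nsmul_eq_mul]
  have hRr : (((s + t).factorial : ℕ) : ℂ) *
      (((r.factorial * s.factorial * t.factorial : ℕ) : ℂ) *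
        shuffleMul g P (shuffleMul g Q R)
          (fun i => x (Fin.cast (Nat.add_assoc r s t).symm i)))
      = (((s + t).factorial : ℕ) : ℂ) *
        ∑ σ : Equiv.Perm (Fin (r + s + t)), G3 g P Q R x σ := by
    rw [← R3]
    calc (((s + t).factorial : ℕ) : ℂ) *
        (((r.factorial * s.factorial * t.factorial : ℕ) : ℂ) *
          shuffleMul g P (shuffleMul g Q R)
            (fun i => x (Fin.cast (Nat.add_assoc r s t).symm i)))
        = ((s.factorial * t.factorial : ℕ) : ℂ) *
          (((r.factorial * (s + t).factorial : ℕ) : ℂ) *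
            shuffleMul g P (shuffleMul g Q R)
              (fun i => x (Fin.cast (Nat.add_assoc r s t).symm i))) := by push_cast; ring
      _ = ((s.factorial * t.factorial : ℕ) : ℂ) *
          ∑ w : Equiv.Perm (Fin (r + (s + t))), sTerm g P (shuffleMul g Q R)
            (fun i => x (Fin.cast (Nat.add_assoc r s t).symm i)) w := by rw [R1]
      _ = ∑ w : Equiv.Perm (Fin (r + (s + t))),
          ((s.factorial * t.factorial : ℕ) : ℂ) * sTerm g P (shuffleMul g Q R)
            (fun i => x (Fin.cast (Nat.add_assoc r s t).symm i)) w :=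
            Finset.mul_sum _ _ _
      _ = ∑ w : Equiv.Perm (Fin (r + (s + t))), ∑ u : Equiv.Perm (Fin (s + t)),
          G3 g P Q R x ((finCongr (Nat.add_assoc r s t).symm).permCongr
            (w * blP (1 : Equiv.Perm (Fin r)) u)) :=
            Finset.sum_congr rfl fun w _ => R2 w
  have hRkey : ((r.factorial * s.factorial * t.factorial : ℕ) : ℂ) *
      shuffleMul g P (shuffleMul g Q R)
        (fun i => x (Fin.cast (Nat.add_assoc r s t).symm i))
      = ∑ σ : Equiv.Perm (Fin (r + s + t)), G3 g P Q R x σ :=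
    mul_left_cancel₀ (Nat.cast_ne_zero.mpr (s + t).factorial_ne_zero) hRr
  have hne : ((r.factorial * s.factorial * t.factorial : ℕ) : ℂ) ≠ 0 :=
    Nat.cast_ne_zero.mpr
      (Nat.mul_ne_zero (Nat.mul_ne_zero r.factorial_ne_zero s.factorial_ne_zero)
        t.factorial_ne_zero)
  exact mul_left_cancel₀ hne (hLkey.trans hRkey.symm)
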